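/- Quantization commutes with intersection for intervals on the grid: if δ_min, δ_max, u are integer multiples of τμ and I^p and Î are closed intervals whose endpoints lie in τμℤ shifted consistently with the quantization cells (specifically, intervals of the form [aτμ + r, bτμ + r] with fixed offset r satisfying |r| ≤ τμ/2), and I^p ∩ Î ≠ ∅, then ℓ(I^p ∩ Î) = ℓ(I^p) ∩ ℓ(Î). -/

import Mathlib

/-- Quantization commutes with intersection for grid-aligned intervals with a
common offset `r`, `|r| ≤ τμ/2`, provided the intersection is nonempty. -/
theorem quantization_commutes_with_intersection
    (τ μ : ℝ) (hτ : 0 < τ) (hμ : 0 < μ)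
    (ℓ : ℝ → ℝ)
    (hℓ : ∀ x : ℝ, ∃ c : ℤ, ℓ x = c * (τ * μ) ∧
        c * (τ * μ) - τ * μ / 2 < x ∧ x ≤ c * (τ * μ) + τ * μ / 2)
    (r : ℝ) (hr : |r| ≤ τ * μ / 2)
    (a b a' b' : ℤ)
    (Ip Ihat : Set ℝ)
    (hIp : Ip = Set.Icc ((a : ℝ) * (τ * μ) + r) ((b : ℝ) * (τ * μ) + r))
    (hIhat : Ihat = Set.Icc ((a' : ℝ) * (τ * μ) + r) ((b' : ℝ) * (τ * μ) + r))
    (hne : (Ip ∩ Ihat).Nonempty) :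
    ℓ '' (Ip ∩ Ihat) = ℓ '' Ip ∩ ℓ '' Ihat := by
  have hτμ : 0 < τ * μ := mul_pos hτ hμ
  apply Set.Subset.antisymm
  · exact Set.subset_inter (Set.image_mono Set.inter_subset_left)
      (Set.image_mono Set.inter_subset_right)
  rintro y ⟨⟨x1, hx1, rfl⟩, ⟨x2, hx2, hx2y⟩⟩
  obtain ⟨c, hc1, hc2, hc3⟩ := hℓ x1
  obtain ⟨c2, hd1, hd2, hd3⟩ := hℓ x2
  have hcc : (c2 : ℝ) = c := by
    have h : (c2 : ℝ) * (τ * μ) = c * (τ * μ) := by rw [← hc1, ← hd1, hx2y]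
    exact mul_right_cancel₀ (ne_of_gt hτμ) h
  rw [hcc] at hd2 hd3
  obtain ⟨z, hz1, hz2⟩ := hne
  rw [hIp] at hx1 hz1
  rw [hIhat] at hx2 hz2
  set x := min (max x1 x2) (min ((b:ℝ)*(τ*μ)+r) ((b':ℝ)*(τ*μ)+r)) with hxdef
  have hxIp : x ∈ Ip := by
    rw [hIp]
    constructor
    · exact le_min (le_max_of_le_left hx1.1)
        (le_min (hz1.1.trans hz1.2) (hz1.1.trans hz2.2))
    · exact (min_le_right _ _).trans (min_le_left _ _)
  have hxIhat : x ∈ Ihat := by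
    rw [hIhat]
    constructor
    · exact le_min (le_max_of_le_right hx2.1)
        (le_min (hz2.1.trans hz1.2) (hz2.1.trans hz2.2))
    · exact (min_le_right _ _).trans (min_le_right _ _)
  have hcellL : (c : ℝ) * (τ * μ) - τ * μ / 2 < x :=
    lt_min (lt_max_of_lt_left hc2)
      (lt_min (lt_of_lt_of_le hc2 hx1.2) (lt_of_lt_of_le hd2 hx2.2))
  have hcellU : x ≤ (c : ℝ) * (τ * μ) + τ * μ / 2 :=
    (min_le_left _ _).trans (max_le hc3 hd3)
  obtain ⟨c3, he1, he2, he3⟩ := hℓ x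
  have hc3c : c3 = c := by
    have h1 : (c : ℝ) < c3 + 1 := by nlinarith [hcellL, he3]
    have h2 : (c3 : ℝ) < c + 1 := by nlinarith [he2, hcellU]
    have h1' : c < c3 + 1 := by exact_mod_cast h1
    have h2' : c3 < c + 1 := by exact_mod_cast h2
    omega
  exact ⟨x, ⟨hxIp, hxIhat⟩, by rw [he1, hc3c, ← hc1]⟩
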